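/- Let P be a finite point set in ℝ^d and for each p ∈ P fix a finite cone cover 𝒞(p) of ℝ^d by cones with apex p and half-angle at most π/12, each cone containing at least one point of P∖{p}. Define reach(p) = max over C ∈ 𝒞(p) of the distance from p to the nearest point of P∖{p} in C. If pq is a Delaunay edge of P (i.e., some open ball with p and q on its boundary contains no point of P), then |pq| ≤ 2·reach(p). -/

import Mathlib

open InnerProductGeometry Real

lemma angle_le_inner_lb {V : Type*} [NormedAddCommGroup V] [InnerProductSpace ℝ V]
    {a w : V} (hw : ‖w‖ = 1) (ha : angle a w ≤ π / 12) :
    Real.sqrt 3 / 2 * ‖a‖ ≤ inner ℝ a w := by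
  rcases eq_or_ne a 0 with rfl | ha0
  · exfalso
    rw [angle_zero_left] at ha
    nlinarith [Real.pi_pos]
  have hna : (0:ℝ) < ‖a‖ := norm_pos_iff.mpr ha0
  have h1 : Real.cos (π / 6) ≤ Real.cos (angle a w) :=
    Real.cos_le_cos_of_nonneg_of_le_pi (angle_nonneg a w)
      (by linarith [Real.pi_pos]) (by linarith [Real.pi_pos])
  rw [Real.cos_pi_div_six] at h1
  have h2 : Real.cos (angle a w) = inner ℝ a w / ‖a‖ := by
    rw [cos_angle, hw, mul_one]
  rw [h2, le_div_iff₀ hna] at h1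
  linarith

set_option maxHeartbeats 1000000 in
lemma inner_lb_of_angles {V : Type*} [NormedAddCommGroup V] [InnerProductSpace ℝ V]
    {a b w : V} (hw : ‖w‖ = 1) (ha : angle a w ≤ π / 12) (hb : angle b w ≤ π / 12) :
    ‖a‖ * ‖b‖ / 2 ≤ inner ℝ a b := by
  set A : ℝ := inner ℝ a w with hA
  set B : ℝ := inner ℝ b w with hB
  have hfa : Real.sqrt 3 / 2 * ‖a‖ ≤ A := angle_le_inner_lb hw ha
  have hfb : Real.sqrt 3 / 2 * ‖b‖ ≤ B := angle_le_inner_lb hw hb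
  have hs3 : Real.sqrt 3 ^ 2 = 3 := Real.sq_sqrt (by norm_num)
  have hww : (inner ℝ w w : ℝ) = 1 := by
    rw [real_inner_self_eq_norm_sq, hw]; norm_num
  have hwa : (inner ℝ w a : ℝ) = A := by rw [real_inner_comm]
  have hwb : (inner ℝ w b : ℝ) = B := by rw [real_inner_comm]
  have hCS := real_inner_mul_inner_self_le (a - A • w) (b - B • w)
  have e1 : (inner ℝ (a - A • w) (b - B • w) : ℝ) = inner ℝ a b - A * B := by
    simp only [inner_sub_left, inner_sub_right, real_inner_smul_left, real_inner_smul_right,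
      hww, hwa, hwb, ← hA, ← hB]
    ring
  have e2 : (inner ℝ (a - A • w) (a - A • w) : ℝ) = ‖a‖ ^ 2 - A ^ 2 := by
    simp only [inner_sub_left, inner_sub_right, real_inner_smul_left, real_inner_smul_right,
      hww, hwa, ← hA]
    rw [real_inner_self_eq_norm_sq]; ring
  have e3 : (inner ℝ (b - B • w) (b - B • w) : ℝ) = ‖b‖ ^ 2 - B ^ 2 := by
    simp only [inner_sub_left, inner_sub_right, real_inner_smul_left, real_inner_smul_right,
      hww, hwb, ← hB]
    rw [real_inner_self_eq_norm_sq]; ring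
  rw [e1, e2, e3] at hCS
  have hCa : A ≤ ‖a‖ := by
    have := abs_real_inner_le_norm a w
    rw [hw, mul_one] at this
    exact (abs_le.mp this).2
  have hCb : B ≤ ‖b‖ := by
    have := abs_real_inner_le_norm b w
    rw [hw, mul_one] at this
    exact (abs_le.mp this).2
  have hna : (0:ℝ) ≤ ‖a‖ := norm_nonneg a
  have hnb : (0:ℝ) ≤ ‖b‖ := norm_nonneg b
  have hA0 : (0:ℝ) ≤ A := le_trans (by positivity) hfa
  have hB0 : (0:ℝ) ≤ B := le_trans (by positivity) hfb
  have hfa2 : 3 / 4 * ‖a‖ ^ 2 ≤ A ^ 2 := by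
    have h := mul_le_mul hfa hfa (by positivity) hA0
    have e : (Real.sqrt 3 / 2 * ‖a‖) * (Real.sqrt 3 / 2 * ‖a‖)
        = Real.sqrt 3 ^ 2 * (‖a‖ ^ 2 / 4) := by ring
    rw [e, hs3] at h
    nlinarith
  have hfb2 : 3 / 4 * ‖b‖ ^ 2 ≤ B ^ 2 := by
    have h := mul_le_mul hfb hfb (by positivity) hB0
    have e : (Real.sqrt 3 / 2 * ‖b‖) * (Real.sqrt 3 / 2 * ‖b‖)
        = Real.sqrt 3 ^ 2 * (‖b‖ ^ 2 / 4) := by ring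
    rw [e, hs3] at h
    nlinarith
  have hAB : 3 / 4 * (‖a‖ * ‖b‖) ≤ A * B := by
    have h := mul_le_mul hfa hfb (by positivity) hA0
    have e : (Real.sqrt 3 / 2 * ‖a‖) * (Real.sqrt 3 / 2 * ‖b‖)
        = Real.sqrt 3 ^ 2 * (‖a‖ * ‖b‖ / 4) := by ring
    rw [e, hs3] at h
    nlinarith
  have h1 : ‖a‖ ^ 2 - A ^ 2 ≤ ‖a‖ ^ 2 / 4 := by linarith
  have h2 : ‖b‖ ^ 2 - B ^ 2 ≤ ‖b‖ ^ 2 / 4 := by linarith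
  have h1' : (0:ℝ) ≤ ‖a‖ ^ 2 - A ^ 2 := by nlinarith
  have h2' : (0:ℝ) ≤ ‖b‖ ^ 2 - B ^ 2 := by nlinarith
  have hprod : (inner ℝ a b - A * B) * (inner ℝ a b - A * B) ≤ (‖a‖ * ‖b‖ / 4) * (‖a‖ * ‖b‖ / 4) := by
    calc (inner ℝ a b - A * B) * (inner ℝ a b - A * B)
        ≤ (‖a‖ ^ 2 - A ^ 2) * (‖b‖ ^ 2 - B ^ 2) := hCS
      _ ≤ (‖a‖ ^ 2 / 4) * (‖b‖ ^ 2 / 4) := mul_le_mul h1 h2 h2' (by positivity)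
      _ = (‖a‖ * ‖b‖ / 4) * (‖a‖ * ‖b‖ / 4) := by ring
  have hge : -(‖a‖ * ‖b‖ / 4) ≤ (inner ℝ a b : ℝ) - A * B := by
    nlinarith [sq_nonneg ((inner ℝ a b : ℝ) - A * B + ‖a‖ * ‖b‖ / 4), mul_nonneg hna hnb]
  linarith [mul_nonneg hna hnb]

/-- If every cone of a cover of `ℝ^d` by cones with apex `p` and half-angle `π/12`
contains a point of `P ∖ {p}` within distance `ℓ = reach(p)`, then every Delaunay edge
`pq` of `P` satisfies `|pq| ≤ 2·reach(p)`. A cone is given by a nonzero direction `v`,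
and a Delaunay edge is witnessed by a ball with `p` and `q` on its boundary and no
point of `P` in its interior. -/
theorem stmt_18 (d : ℕ) (P : Finset (EuclideanSpace ℝ (Fin d)))
    (p : EuclideanSpace ℝ (Fin d)) (hp : p ∈ P)
    (𝒞 : Finset (EuclideanSpace ℝ (Fin d))) (h𝒞 : ∀ v ∈ 𝒞, v ≠ 0)
    (hcover : ∀ u : EuclideanSpace ℝ (Fin d), u ≠ p →
      ∃ v ∈ 𝒞, InnerProductGeometry.angle (u - p) v ≤ Real.pi / 12)
    (ℓ : ℝ)
    (hreach : ∀ v ∈ 𝒞, ∃ q ∈ P, q ≠ p ∧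
      InnerProductGeometry.angle (q - p) v ≤ Real.pi / 12 ∧ dist p q ≤ ℓ)
    (q : EuclideanSpace ℝ (Fin d)) (hq : q ∈ P) (hqp : q ≠ p)
    (hDel : ∃ (x : EuclideanSpace ℝ (Fin d)) (ρ : ℝ),
      dist p x = ρ ∧ dist q x = ρ ∧ ∀ z ∈ P, ρ ≤ dist z x) :
    dist p q ≤ 2 * ℓ := by
  obtain ⟨x, ρ, hpx, hqx, hmin⟩ := hDel
  have hρℓ : ρ ≤ ℓ := by
    by_cases hx : x = p
    · -- then ρ = 0 and ℓ ≥ 0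
      obtain ⟨v, hv, -⟩ := hcover q hqp
      obtain ⟨r, -, -, -, hr⟩ := hreach v hv
      have : ρ = 0 := by rw [← hpx, hx, dist_self]
      linarith [dist_nonneg.trans hr]
    · obtain ⟨v, hv, hangx⟩ := hcover x hx
      obtain ⟨r, hrP, hrp, hangr, hrℓ⟩ := hreach v hv
      -- normalize v
      have hv0 : v ≠ 0 := h𝒞 v hv
      have hnv : (0:ℝ) < ‖v‖ := norm_pos_iff.mpr hv0
      set w : EuclideanSpace ℝ (Fin d) := ‖v‖⁻¹ • v with hwdef
      have hw : ‖w‖ = 1 := by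
        rw [hwdef, norm_smul, norm_inv, norm_norm, inv_mul_cancel₀ hnv.ne']
      have hangx' : InnerProductGeometry.angle (x - p) w ≤ Real.pi / 12 := by
        rwa [hwdef, InnerProductGeometry.angle_smul_right_of_pos _ _ (by positivity)]
      have hangr' : InnerProductGeometry.angle (r - p) w ≤ Real.pi / 12 := by
        rwa [hwdef, InnerProductGeometry.angle_smul_right_of_pos _ _ (by positivity)]
      have hkey := inner_lb_of_angles hw hangr' hangx'
      -- expand dist r x via inner ℝ products
      have hrx : ρ ≤ dist r x := hmin r hrP
      have hxp : ‖x - p‖ = ρ := by rw [← hpx, dist_comm, dist_eq_norm]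
      have hrx2 : ρ ^ 2 ≤ ‖r - p‖ ^ 2 - 2 * inner ℝ (r - p) (x - p) + ρ ^ 2 := by
        have hd : dist r x ^ 2 = ‖r - p‖ ^ 2 - 2 * inner ℝ (r - p) (x - p) + ‖x - p‖ ^ 2 := by
          rw [dist_eq_norm]
          have : r - x = (r - p) - (x - p) := by abel
          rw [this, norm_sub_sq_real]
        have : ρ ^ 2 ≤ dist r x ^ 2 := by
          have h0 : (0:ℝ) ≤ ρ := hpx ▸ dist_nonneg
          nlinarith
        rw [hd, hxp] at this
        exact this
      have hrp0 : (0:ℝ) < ‖r - p‖ := by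
        rw [norm_pos_iff, sub_ne_zero]; exact hrp
      have hdist : dist p r = ‖r - p‖ := by rw [dist_comm, dist_eq_norm]
      have hρr : ρ ≤ ‖r - p‖ := by rw [hxp] at hkey; nlinarith
      linarith [hdist ▸ hrℓ]
  calc dist p q ≤ dist p x + dist x q := dist_triangle p x q
    _ = ρ + ρ := by rw [hpx, dist_comm, hqx]
    _ ≤ 2 * ℓ := by linarith
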